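/- Let f : W → V be an injective linear map between finite-dimensional real vector spaces, P ⊆ V a polytope, and F a face of P with f⁻¹(relint F) ≠ ∅. Then the conormal cone satisfies N(f⁻¹(F), f⁻¹(P)) = f*(N(F,P)), the image of N(F,P) under the adjoint map f* : V* → W*. -/

import Mathlib

open Set

section FarkasAux

variable {E : Type*} [NormedAddCommGroup E] [NormedSpace ℝ E] [FiniteDimensional ℝ E]

/-- Conic Carathéodory-type reduction: any nonnegative combination supported in a finset `τ`
equals a nonnegative combination over a linearly independent subfamily. -/
private lemma cone_reduce {ι : Type*} [Fintype ι] (g : ι → E) (k : ℕ) :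
    ∀ (τ : Finset ι) (t : ι → ℝ), (∀ i, 0 ≤ t i) → (∀ i ∉ τ, t i = 0) → τ.card ≤ k →
      ∃ σ : Finset ι, LinearIndependent ℝ (fun i : σ => g i) ∧
        ∃ u : σ → ℝ, (∀ i, 0 ≤ u i) ∧ ∑ i : σ, u i • g ↑i = ∑ i, t i • g i := by
  classical
  induction k with
  | zero =>
    intro τ t ht htsupp hcard
    have hτ : τ = ∅ := Finset.card_eq_zero.mp (le_antisymm hcard (Nat.zero_le _))
    have ht0 : ∀ i, t i = 0 := fun i => htsupp i (by simp [hτ])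
    refine ⟨∅, linearIndependent_empty_type, fun _ => 0, fun _ => le_rfl, ?_⟩
    simp [ht0]
  | succ k IH =>
    intro τ t ht htsupp hcard
    by_cases hli : LinearIndependent ℝ (fun i : τ => g i)
    · refine ⟨τ, hli, fun i => t ↑i, fun i => ht ↑i, ?_⟩
      rw [Finset.univ_eq_attach, Finset.sum_attach τ (fun i => t i • g i)]
      exact Finset.sum_subset (Finset.subset_univ τ)
        (fun i _ hi => by rw [htsupp i hi, zero_smul])
    · obtain ⟨s, hs0, i₀, hi₀⟩ := Fintype.not_linearIndependent_iff.mp hli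
      -- make sure there is a positive coefficient
      obtain ⟨s, hs0, i₀, hi₀⟩ :
          ∃ s : τ → ℝ, ∑ i, s i • g ↑i = 0 ∧ ∃ i₀, 0 < s i₀ := by
        rcases hi₀.lt_or_gt with h | h
        · exact ⟨-s, by simpa using congrArg Neg.neg hs0, i₀, by simpa using h⟩
        · exact ⟨s, hs0, i₀, h⟩
      set sh : ι → ℝ := fun i => if h : i ∈ τ then s ⟨i, h⟩ else 0 with hsh
      have hshsum : ∑ i, sh i • g i = 0 := by
        have h1 : ∑ i, sh i • g i = ∑ i ∈ τ, sh i • g i :=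
          (Finset.sum_subset (Finset.subset_univ τ)
            (fun i _ hi => by simp [hsh, dif_neg hi])).symm
        rw [h1, ← Finset.sum_attach τ (fun i => sh i • g i)]
        rw [← hs0]
        refine Finset.sum_congr rfl fun i _ => ?_
        simp [hsh, dif_pos i.2]
      set J : Finset ι := τ.filter (fun i => 0 < sh i) with hJ
      have hJne : J.Nonempty := by
        refine ⟨↑i₀, Finset.mem_filter.mpr ⟨i₀.2, ?_⟩⟩
        simpa [hsh, dif_pos i₀.2] using hi₀
      set lam : ℝ := J.inf' hJne (fun i => t i / sh i) with hlam
      have hlam0 : 0 ≤ lam := by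
        refine Finset.le_inf' hJne _ fun i hi => ?_
        exact div_nonneg (ht i) (le_of_lt (Finset.mem_filter.mp hi).2)
      set t' : ι → ℝ := fun i => t i - lam * sh i with ht'
      have ht'0 : ∀ i, 0 ≤ t' i := by
        intro i
        by_cases h : 0 < sh i
        · have hiJ : i ∈ J := by
            refine Finset.mem_filter.mpr ⟨?_, h⟩
            by_contra hiτ
            simp [hsh, dif_neg hiτ] at h
          have h1 : lam ≤ t i / sh i := hlam ▸ Finset.inf'_le (fun i => t i / sh i) hiJ
          have h2 : lam * sh i ≤ t i := by
            calc lam * sh i ≤ (t i / sh i) * sh i := by nlinarith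
            _ = t i := div_mul_cancel₀ _ (ne_of_gt h)
          simp only [ht']; linarith
        · push_neg at h
          have h1 : lam * sh i ≤ 0 := mul_nonpos_iff.mpr (Or.inl ⟨hlam0, h⟩)
          have h2 := ht i
          simp only [ht']; linarith
      have hsum' : ∑ i, t' i • g i = ∑ i, t i • g i := by
        simp only [ht', sub_smul, Finset.sum_sub_distrib, mul_smul]
        rw [← Finset.smul_sum, hshsum, smul_zero, sub_zero]
      obtain ⟨istar, histar, hlameq⟩ := Finset.exists_mem_eq_inf' hJne (fun i => t i / sh i)
      have histarτ : istar ∈ τ := (Finset.mem_filter.mp histar).1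
      have hshstar : 0 < sh istar := (Finset.mem_filter.mp histar).2
      have ht'star : t' istar = 0 := by
        have hl : lam = t istar / sh istar := hlam.trans hlameq
        simp only [ht', hl, div_mul_cancel₀ _ (ne_of_gt hshstar), sub_self]
      have hsupp' : ∀ i ∉ τ.erase istar, t' i = 0 := by
        intro i hi
        by_cases hiτ : i ∈ τ
        · have : i = istar := by
            by_contra hne
            exact hi (Finset.mem_erase.mpr ⟨hne, hiτ⟩)
          rw [this]; exact ht'star
        · simp [ht', htsupp i hiτ, hsh, dif_neg hiτ]
      have hcard' : (τ.erase istar).card ≤ k := by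
        rw [Finset.card_erase_of_mem histarτ]
        omega
      obtain ⟨σ, hσ, u, hu, husum⟩ := IH (τ.erase istar) t' ht'0 hsupp' hcard'
      exact ⟨σ, hσ, u, hu, by rw [husum, hsum']⟩


private lemma isClosed_coneGen {ι : Type*} [Fintype ι] (g : ι → E) :
    IsClosed {x : E | ∃ t : ι → ℝ, (∀ i, 0 ≤ t i) ∧ ∑ i, t i • g i = x} := by
  classical
  have key : {x : E | ∃ t : ι → ℝ, (∀ i, 0 ≤ t i) ∧ ∑ i, t i • g i = x}
      = ⋃ σ ∈ {σ : Finset ι | LinearIndependent ℝ (fun i : σ => g i)},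
          (fun u : σ → ℝ => ∑ i : σ, u i • g ↑i) '' {u | ∀ i, 0 ≤ u i} := by
    ext x
    simp only [mem_setOf_eq, mem_iUnion, Set.mem_image, exists_prop]
    constructor
    · rintro ⟨t, ht, rfl⟩
      obtain ⟨σ, hσ, u, hu, hsum⟩ :=
        cone_reduce g (Finset.univ (α := ι)).card Finset.univ t ht
          (fun i hi => absurd (Finset.mem_univ i) hi) le_rfl
      exact ⟨σ, hσ, u, hu, hsum⟩
    · rintro ⟨σ, hσ, u, hu, rfl⟩
      refine ⟨fun i => if h : i ∈ σ then u ⟨i, h⟩ else 0, fun i => ?_, ?_⟩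
      · dsimp only
        split
        · exact hu _
        · exact le_rfl
      · rw [← Finset.sum_subset (Finset.subset_univ σ)
          (fun i _ hi => by simp [hi])]
        rw [← Finset.sum_attach σ (fun i => (if h : i ∈ σ then u ⟨i, h⟩ else 0) • g i)]
        rw [Finset.univ_eq_attach]
        refine Finset.sum_congr rfl fun i _ => ?_
        simp [i.2]
  rw [key]
  refine Set.Finite.isClosed_biUnion (Set.toFinite _) fun σ hσ => ?_
  set Φ : (↥σ → ℝ) →ₗ[ℝ] E := ∑ i : ↥σ, (LinearMap.proj i).smulRight (g ↑i) with hΦ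
  have hΦapp : ∀ u : ↥σ → ℝ, Φ u = ∑ i : σ, u i • g ↑i := fun u => by
    simp [hΦ, LinearMap.sum_apply, LinearMap.smulRight_apply, LinearMap.proj_apply]
  have hker : LinearMap.ker Φ = ⊥ := by
    refine LinearMap.ker_eq_bot'.mpr fun u hu => ?_
    have h0 : ∑ i : σ, u i • g ↑i = 0 := by rw [← hΦapp]; exact hu
    have := Fintype.linearIndependent_iff.mp hσ u h0
    funext i; exact this i
  have hce := LinearMap.isClosedEmbedding_of_injective hker
  have hclosed : IsClosed {u : ↥σ → ℝ | ∀ i, 0 ≤ u i} := by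
    have : {u : ↥σ → ℝ | ∀ i, 0 ≤ u i} = ⋂ i, (fun u : ↥σ → ℝ => u i) ⁻¹' Ici 0 := by
      ext u; simp [mem_iInter]
    rw [this]
    exact isClosed_iInter fun i => isClosed_Ici.preimage (continuous_apply i)
  have himg : (fun u : ↥σ → ℝ => ∑ i : σ, u i • g ↑i) '' {u | ∀ i, 0 ≤ u i}
      = Φ '' {u | ∀ i, 0 ≤ u i} := Set.image_congr fun u _ => (hΦapp u).symm
  rw [himg]
  exact hce.isClosedMap _ hclosed

/-- Farkas-type lemma: if every vanishing nonnegative combination of the `y i` has nonnegative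
`c`-value, then there is a linear functional `η` with `η (y i) ≤ c i` for all `i`. -/
private lemma farkas_exists {ι : Type*} [Fintype ι] (y : ι → E) (c : ι → ℝ)
    (h : ∀ t : ι → ℝ, (∀ i, 0 ≤ t i) → ∑ i, t i • y i = 0 → 0 ≤ ∑ i, t i * c i) :
    ∃ η : E →ₗ[ℝ] ℝ, ∀ i, η (y i) ≤ c i := by
  classical
  set C : Set (E × ℝ) := {x | ∃ t : ι → ℝ, (∀ i, 0 ≤ t i) ∧ ∑ i, t i • (y i, c i) = x} with hC
  have hsum : ∀ t : ι → ℝ, ∑ i, t i • ((y i, c i) : E × ℝ)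
      = (∑ i, t i • y i, ∑ i, t i * c i) := fun t => by
    rw [Prod.ext_iff]
    constructor
    · rw [Prod.fst_sum]; exact Finset.sum_congr rfl fun i _ => rfl
    · rw [Prod.snd_sum]; exact Finset.sum_congr rfl fun i _ => rfl
  have hCclosed : IsClosed C := isClosed_coneGen _
  have hCconv : Convex ℝ C := by
    rintro x ⟨t, ht, rfl⟩ x' ⟨t', ht', rfl⟩ a b ha hb hab
    refine ⟨fun i => a * t i + b * t' i,
      fun i => add_nonneg (mul_nonneg ha (ht i)) (mul_nonneg hb (ht' i)), ?_⟩
    simp only [add_smul, mul_smul, Finset.sum_add_distrib, ← Finset.smul_sum]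
  have hCscale : ∀ (μ : ℝ), 0 ≤ μ → ∀ x ∈ C, μ • x ∈ C := by
    rintro μ hμ x ⟨t, ht, rfl⟩
    refine ⟨fun i => μ * t i, fun i => mul_nonneg hμ (ht i), ?_⟩
    simp only [mul_smul, ← Finset.smul_sum]
  have hmem : ((0 : E), (-1 : ℝ)) ∉ C := by
    rintro ⟨t, ht, heq⟩
    rw [hsum t, Prod.ext_iff] at heq
    have := h t ht heq.1
    have h2 : (∑ i, t i * c i) = -1 := heq.2
    rw [h2] at this
    linarith
  obtain ⟨φ, u, hφC, hφpt⟩ := geometric_hahn_banach_closed_point hCconv hCclosed hmem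
  have h0C : (0 : E × ℝ) ∈ C := ⟨0, fun i => le_rfl, by simp⟩
  have hu0 : 0 < u := by simpa using hφC 0 h0C
  have hnonpos : ∀ x ∈ C, φ x ≤ 0 := by
    intro x hx
    by_contra hpos
    push_neg at hpos
    have hμ : (0:ℝ) ≤ (u + 1) / φ x := div_nonneg (by linarith) (le_of_lt hpos)
    have := hφC _ (hCscale _ hμ x hx)
    rw [map_smul, smul_eq_mul, div_mul_cancel₀ _ (ne_of_gt hpos)] at this
    linarith
  set sc : ℝ := φ (0, 1) with hsc
  have hscneg : sc < 0 := by
    have : φ ((0:E), (-1:ℝ)) = -sc := by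
      rw [hsc, ← map_neg]
      norm_num
    rw [this] at hφpt
    linarith
  have hgen : ∀ i, φ (y i, c i) ≤ 0 := fun i => by
    refine hnonpos _ ⟨fun j => if j = i then 1 else 0, fun j => by positivity, ?_⟩
    simp
  refine ⟨(-sc)⁻¹ • ((φ : E × ℝ →ₗ[ℝ] ℝ).comp (LinearMap.inl ℝ E ℝ)), fun i => ?_⟩
  have hdecomp : φ (y i, c i) = φ (y i, 0) + c i * sc := by
    have : ((y i, c i) : E × ℝ) = (y i, 0) + c i • (0, 1) := by
      simp [Prod.ext_iff]
    rw [this, map_add, map_smul, smul_eq_mul, hsc]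
  have hi := hgen i
  rw [hdecomp] at hi
  have hφi : φ (y i, 0) ≤ c i * (-sc) := by linarith
  simp only [LinearMap.smul_apply, LinearMap.coe_comp, Function.comp_apply,
    LinearMap.inl_apply, smul_eq_mul, ContinuousLinearMap.coe_coe]
  rw [inv_mul_le_iff₀ (by linarith : (0:ℝ) < -sc)]
  linarith [hφi]

end FarkasAux

variable {W V : Type*} [NormedAddCommGroup W] [NormedSpace ℝ W]
  [NormedAddCommGroup V] [NormedSpace ℝ V]

/-- A polytope is the convex hull of finitely many points. -/
def IsPolytope (P : Set V) : Prop :=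
  ∃ s : Finset V, P = convexHull ℝ (s : Set V)

/-- `F` is a face of the polytope `P`. -/
def IsFaceOf (P F : Set V) : Prop :=
  F = P ∨ ∃ f : V →ₗ[ℝ] ℝ, f ≠ 0 ∧ ∃ α : ℝ,
    (∀ x ∈ P, f x ≤ α) ∧ F = P ∩ {x | f x = α}

/-- The conormal cone of `P` at the face `F`. -/
def conormalCone {U : Type*} [AddCommGroup U] [Module ℝ U] (P F : Set U) :
    Set (Module.Dual ℝ U) :=
  {ξ | ∀ v ∈ F, ∀ x ∈ P, ξ x ≤ ξ v}

private lemma exists_forward_mem {F : Set V} {p v : V}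
    (hp : p ∈ intrinsicInterior ℝ F) (hv : v ∈ F) :
    ∃ t : ℝ, 0 < t ∧ p + t • (p - v) ∈ F := by
  obtain ⟨q, hq, rfl⟩ := hp
  have hvspan : v ∈ affineSpan ℝ F := subset_affineSpan ℝ F hv
  have hmem : ∀ t : ℝ, (q : V) + t • ((q : V) - v) ∈ affineSpan ℝ F := by
    intro t
    have h := AffineSubspace.smul_vsub_vadd_mem (affineSpan ℝ F) t q.2 hvspan q.2
    simpa [vsub_eq_sub, vadd_eq_add, add_comm] using h
  set γ : ℝ → affineSpan ℝ F := fun t => ⟨(q : V) + t • ((q : V) - v), hmem t⟩ with hγ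
  have hcont : Continuous γ := by
    apply Continuous.subtype_mk
    exact continuous_const.add (continuous_id.smul continuous_const)
  have h0 : γ 0 = q := by
    apply Subtype.ext
    simp [hγ]
  have hnhds : γ ⁻¹' interior ((↑) ⁻¹' F) ∈ nhds (0 : ℝ) :=
    hcont.continuousAt.preimage_mem_nhds (isOpen_interior.mem_nhds (h0 ▸ hq))
  obtain ⟨ε, hε, hball⟩ := Metric.mem_nhds_iff.mp hnhds
  refine ⟨ε / 2, by positivity, ?_⟩
  have hb : (ε / 2 : ℝ) ∈ Metric.ball (0 : ℝ) ε := by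
    rw [Metric.mem_ball, Real.dist_eq, sub_zero, abs_of_pos (by positivity)]
    linarith
  have hFmem : γ (ε / 2) ∈ ((↑) ⁻¹' F : Set (affineSpan ℝ F)) := interior_subset (hball hb)
  exact hFmem

/-- For an injective linear map `f : W → V`, a polytope `P ⊆ V` and a face
`F` of `P` with `f⁻¹(relint F) ≠ ∅`, one has `N(f⁻¹(F), f⁻¹(P)) = f*(N(F, P))`. -/
theorem conormalCone_preimage [FiniteDimensional ℝ W] [FiniteDimensional ℝ V]
    (f : W →ₗ[ℝ] V) (hf : Function.Injective f) {P F : Set V}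
    (hP : IsPolytope P) (hF : IsFaceOf P F)
    (hri : (f ⁻¹' (intrinsicInterior ℝ F)).Nonempty) :
    conormalCone (f ⁻¹' P) (f ⁻¹' F) = f.dualMap '' conormalCone P F := by
  classical
  obtain ⟨s, rfl⟩ := hP
  apply Set.Subset.antisymm
  · intro ξ hξ
    obtain ⟨w0, hw0⟩ := hri
    have hw0i : f w0 ∈ intrinsicInterior ℝ F := hw0
    have hp0F : f w0 ∈ F := intrinsicInterior_subset hw0i
    have hFP : F ⊆ convexHull ℝ (s : Set V) := by
      rcases hF with h | ⟨g, -, α, -, h⟩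
      · exact h ▸ subset_rfl
      · rw [h]; exact inter_subset_left
    set m := Module.finrank ℝ W with hm
    set e : Module.Basis (Fin m) ℝ W := Module.finBasis ℝ W with he
    set y : (↥s ⊕ (Fin m ⊕ Fin m)) → V :=
      Sum.elim (fun j => ↑j) (Sum.elim (fun i => f (e i)) (fun i => -f (e i))) with hy
    set c : (↥s ⊕ (Fin m ⊕ Fin m)) → ℝ :=
      Sum.elim (fun _ => ξ w0) (Sum.elim (fun i => ξ (e i)) (fun i => -ξ (e i))) with hc
    have hcons : ∀ t : (↥s ⊕ (Fin m ⊕ Fin m)) → ℝ, (∀ i, 0 ≤ t i) →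
        ∑ i, t i • y i = 0 → 0 ≤ ∑ i, t i * c i := by
      intro t ht h0
      set T : ℝ := ∑ j : ↥s, t (Sum.inl j) with hT
      set w : W := ∑ i, (t (Sum.inr (Sum.inl i)) - t (Sum.inr (Sum.inr i))) • e i with hw
      have hfw : f w = ∑ i, (t (Sum.inr (Sum.inl i)) - t (Sum.inr (Sum.inr i))) • f (e i) := by
        rw [hw, map_sum]
        exact Finset.sum_congr rfl fun i _ => by rw [map_smul]
      have hξw : ξ w = ∑ i, (t (Sum.inr (Sum.inl i)) - t (Sum.inr (Sum.inr i))) * ξ (e i) := by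
        rw [hw, map_sum]
        exact Finset.sum_congr rfl fun i _ => by rw [map_smul, smul_eq_mul]
      have hsplit : (∑ j : ↥s, t (Sum.inl j) • (↑j : V)) + f w = 0 := by
        rw [hfw]
        simp only [Fintype.sum_sum_type, hy, Sum.elim_inl, Sum.elim_inr, smul_neg] at h0
        simp only [sub_smul, Finset.sum_sub_distrib]
        rw [sub_eq_add_neg, ← Finset.sum_neg_distrib]
        exact h0
      have hval : ∑ i, t i * c i = T * ξ w0 + ξ w := by
        rw [hξw]
        simp only [Fintype.sum_sum_type, hc, Sum.elim_inl, Sum.elim_inr, hT]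
        simp only [mul_neg, Finset.sum_neg_distrib, sub_mul, Finset.sum_sub_distrib,
          Finset.sum_mul]
        ring
      rw [hval]
      have hT0 : 0 ≤ T := Finset.sum_nonneg fun j _ => ht _
      rcases eq_or_lt_of_le hT0 with hTeq | hTpos
      · have hz : ∀ j : ↥s, t (Sum.inl j) = 0 := by
          intro j
          have := (Finset.sum_eq_zero_iff_of_nonneg (fun j _ => ht (Sum.inl j))).mp hTeq.symm
          exact this j (Finset.mem_univ j)
        have hS : (∑ j : ↥s, t (Sum.inl j) • (↑j : V)) = 0 :=
          Finset.sum_eq_zero fun j _ => by rw [hz j, zero_smul]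
        have hfw0 : f w = 0 := by
          rw [hS, zero_add] at hsplit
          exact hsplit
        have hw0' : w = 0 := hf (by rw [hfw0, map_zero])
        rw [← hTeq, hw0', map_zero]
        norm_num
      · set x : V := Finset.univ.centerMass (fun j : ↥s => t (Sum.inl j)) (fun j => (↑j : V))
          with hx
        have hxP : x ∈ convexHull ℝ (s : Set V) := by
          refine Finset.centerMass_mem_convexHull _ (fun j _ => ht _) ?_ (fun j _ => ?_)
          · rw [← hT]; exact hTpos
          · exact Finset.mem_coe.mpr j.2
        have hfw2 : f w = -(∑ j : ↥s, t (Sum.inl j) • (↑j : V)) := by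
          rw [eq_neg_iff_add_eq_zero, add_comm]
          exact hsplit
        have hfx : f ((-T⁻¹) • w) = x := by
          rw [map_smul, hfw2, hx, Finset.centerMass, ← hT]
          rw [smul_neg, neg_smul, neg_neg]
        have hpre : (-T⁻¹) • w ∈ f ⁻¹' (convexHull ℝ (s : Set V)) := by
          rw [mem_preimage, hfx]; exact hxP
        have hle : ξ ((-T⁻¹) • w) ≤ ξ w0 := hξ w0 (mem_preimage.mpr hp0F) _ hpre
        rw [map_smul, smul_eq_mul] at hle
        have hTne : T ≠ 0 := ne_of_gt hTpos
        have hkey : -ξ w ≤ T * ξ w0 := by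
          have h := mul_le_mul_of_nonneg_left hle (le_of_lt hTpos)
          have h2 : T * (-T⁻¹ * ξ w) = -ξ w := by
            field_simp
          rw [h2] at h
          exact h
        linarith
    obtain ⟨η, hη⟩ := farkas_exists y c hcons
    have hηs : ∀ j : ↥s, η ↑j ≤ ξ w0 := fun j => by simpa [hy, hc] using hη (Sum.inl j)
    have hηe : ∀ i, η (f (e i)) = ξ (e i) := by
      intro i
      have h1 := hη (Sum.inr (Sum.inl i))
      have h2 := hη (Sum.inr (Sum.inr i))
      simp only [hy, hc, Sum.elim_inl, Sum.elim_inr, map_neg, neg_le_neg_iff] at h1 h2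
      exact le_antisymm h1 h2
    have hdual : f.dualMap η = ξ := by
      refine e.ext fun i => ?_
      rw [LinearMap.dualMap_apply]
      exact hηe i
    have hηP : ∀ x ∈ convexHull ℝ (s : Set V), η x ≤ ξ w0 := by
      intro x hx
      have hsub : convexHull ℝ (s : Set V) ⊆ {z | η z ≤ ξ w0} :=
        convexHull_min (fun v hv => hηs ⟨v, hv⟩) (convex_halfSpace_le η.isLinear _)
      exact hsub hx
    have hηp0 : η (f w0) = ξ w0 := by
      have h := congrArg (fun (φ : Module.Dual ℝ W) => φ w0) hdual
      simpa [LinearMap.dualMap_apply] using h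
    have hηF : ∀ v ∈ F, η v = ξ w0 := by
      intro v hv
      obtain ⟨t, htpos, hq⟩ := exists_forward_mem hw0i hv
      have h1 : η v ≤ ξ w0 := hηP v (hFP hv)
      have h2 : η (f w0 + t • (f w0 - v)) ≤ ξ w0 := hηP _ (hFP hq)
      rw [map_add, map_smul, map_sub, smul_eq_mul, hηp0] at h2
      nlinarith [h2, h1, htpos]
    refine ⟨η, ?_, hdual⟩
    intro v hv x hx
    rw [hηF v hv]
    exact hηP x hx
  · rintro ξ ⟨η, hη, rfl⟩
    intro v hv x hx
    exact hη (f v) hv (f x) hx
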